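/- Let G be a group acting transitively on a nonempty type S (MulAction.IsPretransitive G S), let H be a subgroup of G of finite index (H.index ≠ 0), let n : ℕ, and let x : Fin n → S be a system of representatives for the H-orbits on S, i.e. for every s : S there exists exactly one i : Fin n such that s lies in the H-orbit of x i (there is h ∈ H with h • x i = s). Then H.index = ∑ i, H.relindex (MulAction.stabilizer G (x i)); that is, the index of H in G equals the sum over i of the indices of H ⊓ Stab_G(x i) in Stab_G(x i). -/

import Mathlib

theorem index_eq_sum_of_stabilizer_relindices {G S : Type*} [Group G] [Nonempty S]
    [MulAction G S] [MulAction.IsPretransitive G S]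
    (H : Subgroup G) (hH : H.index ≠ 0)
    (n : ℕ) (x : Fin n → S)
    (hx : ∀ s : S, ∃! i : Fin n, ∃ h ∈ H, h • x i = s) :
    H.index = ∑ i, H.relIndex (MulAction.stabilizer G (x i)) := by
  classical
  obtain ⟨s₀⟩ := ‹Nonempty S›
  set K : Fin n → Subgroup G := fun i => MulAction.stabilizer G (x i) with hK
  choose u hu using fun i => MulAction.exists_smul_eq G s₀ (x i)
  -- the map
  have hresp : ∀ i : Fin n, ∀ k k' : K i,
      (QuotientGroup.leftRel (H.subgroupOf (K i))) k k' →
      ((((u i)⁻¹ * k : G) : G ⧸ H) = (((u i)⁻¹ * k' : G) : G ⧸ H)) := by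
    intro i k k' hrel
    rw [QuotientGroup.leftRel_apply] at hrel
    refine (QuotientGroup.eq).2 ?_
    simpa [mul_assoc, Subgroup.mem_subgroupOf] using hrel
  let f : (Σ i : Fin n, (K i ⧸ H.subgroupOf (K i))) → G ⧸ H :=
    fun p => Quotient.liftOn' p.2 (fun k => (((u p.1)⁻¹ * k : G) : G ⧸ H)) (hresp p.1)
  have hbij : Function.Bijective f := by
    constructor
    · rintro ⟨i, a⟩ ⟨j, b⟩ hab
      induction a using Quotient.inductionOn' with | h k =>
      induction b using Quotient.inductionOn' with | h k' =>
      replace hab : (((u i)⁻¹ * k : G) : G ⧸ H) = (((u j)⁻¹ * k' : G) : G ⧸ H) := hab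
      rw [QuotientGroup.eq] at hab
      -- hab : ((u i)⁻¹ * k)⁻¹ * ((u j)⁻¹ * k') ∈ H
      have hij : i = j := by
        have h1 : ∃ h ∈ H, h • x j = x j := ⟨1, H.one_mem, one_smul _ _⟩
        have h2 : ∃ h ∈ H, h • x i = x j := by
          refine ⟨(((u i)⁻¹ * (k : G))⁻¹ * ((u j)⁻¹ * k'))⁻¹, H.inv_mem hab, ?_⟩
          have hk : (k : G) • x i = x i := k.2
          have hk' : (k' : G) • x j = x j := k'.2
          have hui : (u i)⁻¹ • x i = s₀ := by
            rw [inv_smul_eq_iff, hu i]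
          have hk'' : (k' : G)⁻¹ • x j = x j := by rw [inv_smul_eq_iff, hk']
          simp only [mul_inv_rev, inv_inv, mul_assoc, mul_smul, hk, hui, hu j, hk'']
        exact ((hx (x j)).unique h2 h1)
      subst hij
      have : (k : G)⁻¹ * k' ∈ H := by
        have := hab
        simpa [mul_assoc] using this
      refine congrArg (Sigma.mk i) ?_
      refine Quotient.sound' ?_
      rw [QuotientGroup.leftRel_apply]
      exact this
    · intro q
      induction q using Quotient.inductionOn' with | h g =>
      obtain ⟨i, ⟨h, hh, hhx⟩, -⟩ := hx (g⁻¹ • s₀)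
      have hk : u i * (g * h) ∈ K i := by
        have h1 : (g * h) • x i = s₀ := by
          rw [mul_smul, hhx, smul_inv_smul]
        show (u i * (g * h)) • x i = x i
        rw [mul_smul, h1, hu i]
      refine ⟨⟨i, QuotientGroup.mk ⟨u i * (g * h), hk⟩⟩, ?_⟩
      simp only [f, Quotient.liftOn'_mk'']
      show (((u i)⁻¹ * (u i * (g * h)) : G) : G ⧸ H) = QuotientGroup.mk g
      rw [inv_mul_cancel_left]
      exact (QuotientGroup.eq).2 (by simpa using H.inv_mem hh)
  have hfin : Finite (G ⧸ H) := Nat.finite_of_card_ne_zero hH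
  have hfinS : Finite (Σ i : Fin n, (K i ⧸ H.subgroupOf (K i))) :=
    Finite.of_injective f hbij.1
  have hfinI : ∀ i, Finite (K i ⧸ H.subgroupOf (K i)) := fun i =>
    Finite.of_injective (fun a => (⟨i, a⟩ : Σ i, (K i ⧸ H.subgroupOf (K i)))) (by
      intro a b hab; simpa using hab)
  have hcard : Nat.card (Σ i : Fin n, (K i ⧸ H.subgroupOf (K i))) = Nat.card (G ⧸ H) :=
    Nat.card_eq_of_bijective f hbij
  haveI := fun i => Fintype.ofFinite (K i ⧸ H.subgroupOf (K i))
  rw [Subgroup.index, ← hcard]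
  rw [Nat.card_eq_fintype_card, Fintype.card_sigma]
  refine Finset.sum_congr rfl fun i _ => ?_
  rw [Subgroup.relIndex, Subgroup.index, Nat.card_eq_fintype_card]
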